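/- Let f, g : X → ℝ be measurable functions on a probability space and suppose f satisfies an α-margin with constant t0 > 0 (i.e. P(0 < |f(X)| ≤ t) ≤ (t/t0)^α for all t > 0), for finite α > 0. Then E[(1{g(X) ≤ 0} − 1{f(X) ≤ 0})·f(X)] ≤ c·‖f − g‖_∞^{1+α} for some constant c depending only on t0 and α; in fact one may take c = t0^{−α}, i.e. the bound E[(1{g≤0} − 1{f≤0})f] ≤ ‖f − g‖_∞^{1+α}/t0^α. -/

import Mathlib

open MeasureTheory

theorem stmt_11 {Ω : Type*} [MeasurableSpace Ω] (μ : Measure Ω) [IsProbabilityMeasure μ]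
    (f g : Ω → ℝ) (hf : Measurable f) (hg : Measurable g)
    (t0 alpha : ℝ) (ht0 : 0 < t0) (halpha : 0 < alpha)
    (hmargin : ∀ t : ℝ, 0 < t → (μ {x | 0 < |f x| ∧ |f x| ≤ t}).toReal ≤ (t / t0) ^ alpha)
    (C : ℝ) (hC0 : 0 ≤ C) (hC : ∀ᵐ x ∂μ, |f x - g x| ≤ C)
    (hInt : Integrable (fun x =>
      ((if g x ≤ 0 then (1 : ℝ) else 0) - (if f x ≤ 0 then (1 : ℝ) else 0)) * f x) μ) :
    (∫ x, ((if g x ≤ 0 then (1 : ℝ) else 0) - (if f x ≤ 0 then (1 : ℝ) else 0)) * f x ∂μ)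
      ≤ C ^ (1 + alpha) / t0 ^ alpha := by
  set S : Set Ω := {x | 0 < |f x| ∧ |f x| ≤ C} with hSdef
  have hSm : MeasurableSet S :=
    (measurableSet_lt measurable_const hf.abs).inter
      (measurableSet_le hf.abs measurable_const)
  have hle : ∀ᵐ x ∂μ, ((if g x ≤ 0 then (1 : ℝ) else 0) - (if f x ≤ 0 then (1 : ℝ) else 0)) * f x
      ≤ S.indicator (fun _ => C) x := by
    filter_upwards [hC] with x hx
    have hnn : (0 : ℝ) ≤ S.indicator (fun _ => C) x :=
      Set.indicator_nonneg (fun _ _ => hC0) x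
    by_cases hgx : g x ≤ 0 <;> by_cases hfx : f x ≤ 0 <;> simp [hgx, hfx]
    · exact hnn
    · -- g x ≤ 0 < f x
      have hf0 : 0 < f x := lt_of_not_ge hfx
      have hx' : x ∈ S := by
        constructor
        · simpa [abs_of_pos hf0] using hf0
        · rw [abs_of_pos hf0]
          calc f x ≤ f x - g x := by linarith
            _ ≤ |f x - g x| := le_abs_self _
            _ ≤ C := hx
      rw [Set.indicator_of_mem hx']
      rcases hx' with ⟨_, h2⟩
      rw [abs_of_pos hf0] at h2; exact h2
    · -- f x ≤ 0 < g x
      have hg0 : 0 < g x := lt_of_not_ge hgx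
      rcases eq_or_lt_of_le hfx with h0 | h0
      · simp only [h0, neg_zero]; exact hnn
      · have hx' : x ∈ S := by
          constructor
          · simpa [abs_of_neg h0] using h0
          · rw [abs_of_neg h0]
            calc -f x ≤ g x - f x := by linarith
              _ ≤ |f x - g x| := by rw [abs_sub_comm]; exact le_abs_self _
              _ ≤ C := hx
        rw [Set.indicator_of_mem hx']
        rcases hx' with ⟨_, h2⟩
        rw [abs_of_neg h0] at h2; linarith
    · exact hnn
  have hind : Integrable (S.indicator (fun _ => C)) μ := (integrable_const C).indicator hSm
  have h1 : (∫ x, ((if g x ≤ 0 then (1 : ℝ) else 0) - (if f x ≤ 0 then (1 : ℝ) else 0)) * f x ∂μ)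
      ≤ ∫ x, S.indicator (fun _ => C) x ∂μ := integral_mono_ae hInt hind hle
  have h2 : (∫ x, S.indicator (fun _ => C) x ∂μ) = (μ S).toReal * C := by
    rw [integral_indicator_const _ hSm]; simp [smul_eq_mul, Measure.real]
  rcases eq_or_lt_of_le hC0 with rfl | hCpos
  · have hS0 : S = ∅ := by
      ext x; simp only [hSdef, Set.mem_setOf_eq, Set.mem_empty_iff_false, iff_false, not_and]
      intro h; linarith
    have h5 : (∫ x, ((if g x ≤ 0 then (1 : ℝ) else 0) - (if f x ≤ 0 then (1 : ℝ) else 0)) * f x ∂μ) ≤ 0 := by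
      rw [h2, mul_zero] at h1; exact h1
    have h6 : (0:ℝ) ≤ (0:ℝ) ^ (1 + alpha) / t0 ^ alpha := by positivity
    linarith
  · have hm := hmargin C hCpos
    have h3 : (μ S).toReal * C ≤ (C / t0) ^ alpha * C := by
      exact mul_le_mul_of_nonneg_right hm hC0
    have h4 : (C / t0) ^ alpha * C = C ^ (1 + alpha) / t0 ^ alpha := by
      rw [Real.div_rpow hC0 ht0.le, Real.rpow_add hCpos, Real.rpow_one]
      ring
    linarith [h1.trans_eq h2]
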